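/- Consider an execution where in each round r ≥ 1 every non-faulty process broadcasts a binary value that is 'valid', where a value v is valid in round 1 iff at least t+1 non-faulty processes proposed v in round 0, and valid in round r > 1 iff either v was broadcast by a non-faulty process in round r-1, or appears in a valid proof chain back to round 0. Then every value broadcast by a non-faulty process in any round r ≥ 1 was proposed by some non-faulty process in round 0. -/
import Mathlib


/-- Lemma 2 (lem:propose): non-faulty processes only broadcast values proposed by
non-faulty processes in round 0. -/
theorem nonfaulty_values_proposed {α : Type*} [DecidableEq α] (P F : Finset α) (n t : ℕ)
    (sent : ℕ → α → Bool → Prop) (valid : ℕ → Bool → Prop)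
    (hn : P.card = n) (ht : 3 * t < n)
    (hF : F ⊆ P) (hFcard : F.card ≤ t)
    -- a value valid in round 1 was proposed in round 0 by at least t+1 non-faulty processes
    (hvalid1 : ∀ v : Bool, valid 1 v →
      ∃ T ⊆ P, t + 1 ≤ T.card ∧ ∀ p ∈ T, p ∉ F ∧ sent 0 p v)
    -- a value valid in round r > 1 was broadcast by a non-faulty process in round r-1,
    -- or appears in a valid proof chain back to round 0 (i.e. was valid in round r-1)
    (hvalidr : ∀ r : ℕ, 1 < r → ∀ v : Bool, valid r v →
      (∃ p ∈ P, p ∉ F ∧ sent (r - 1) p v) ∨ valid (r - 1) v)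
    -- every non-faulty process broadcasts only valid values in rounds r ≥ 1
    (hbcast : ∀ r : ℕ, 1 ≤ r → ∀ p ∈ P, p ∉ F → ∀ v : Bool, sent r p v → valid r v) :
    ∀ r : ℕ, 1 ≤ r → ∀ p ∈ P, p ∉ F → ∀ v : Bool, sent r p v →
      ∃ q ∈ P, q ∉ F ∧ sent 0 q v := by
  have key : ∀ r : ℕ, 1 ≤ r → ∀ v : Bool, valid r v → ∃ q ∈ P, q ∉ F ∧ sent 0 q v := by
    intro r
    induction r using Nat.strong_induction_on with
    | _ r ih =>
      intro hr v hv
      rcases eq_or_lt_of_le hr with h1 | h1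
      · obtain ⟨T, hTP, hTc, hT⟩ := hvalid1 v (h1 ▸ hv)
        have hne : T.Nonempty := Finset.card_pos.mp (by omega)
        obtain ⟨p, hp⟩ := hne
        exact ⟨p, hTP hp, (hT p hp).1, (hT p hp).2⟩
      · rcases hvalidr r h1 v hv with ⟨p, hpP, hpF, hs⟩ | hv' <;>
        · first
          | exact ih (r-1) (by omega) (by omega) v (hbcast (r-1) (by omega) p hpP hpF v hs)
          | exact ih (r-1) (by omega) (by omega) v hv'
  intro r hr p hp hpF v hs
  exact key r hr v (hbcast r hr p hp hpF v hs)
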